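/- Every complex eigenvalue λ of the matrix Ā (i.e., every element of the spectrum of Ā regarded as a complex matrix) satisfies |λ| < 1; in particular the spectral radius of Ā is strictly less than one. -/

import Mathlib

open Matrix Finset

/-- Let `A` be an `n × n` real matrix (`n ≥ 1`) with nonpositive off-diagonal entries
whose diagonal entries satisfy `A i i = 1 - ∑_{j ≠ i} A j i`.  With
`D = diag(A 1 1, …, A n n)` and `Ā = (D - A) * D⁻¹`, every complex eigenvalue `λ`
of `Ā` (i.e. every element of the spectrum of `Ā` regarded as a complex matrix)
satisfies `|λ| < 1`; in particular the spectral radius of `Ā` is less than one. -/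
theorem matrix_column_stochastic_M_matrix_Abar_spectrum_lt_one
    (n : ℕ) (hn : 1 ≤ n) (A : Matrix (Fin n) (Fin n) ℝ)
    (hoff : ∀ i j, i ≠ j → A i j ≤ 0)
    (hdiag : ∀ i, A i i = 1 - ∑ j ∈ Finset.univ.erase i, A j i)
    (D : Matrix (Fin n) (Fin n) ℝ) (hD : D = Matrix.diagonal fun i => A i i)
    (Abar : Matrix (Fin n) (Fin n) ℝ) (hAbar : Abar = (D - A) * D⁻¹) :
    ∀ μ : ℂ, μ ∈ spectrum ℂ (Abar.map (fun x => (x : ℂ))) → ‖μ‖ < 1 := by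
  intro μ hμ
  have hApos : ∀ i, (1:ℝ) ≤ A i i := by
    intro i
    rw [hdiag i]
    have : ∑ j ∈ Finset.univ.erase i, A j i ≤ 0 :=
      Finset.sum_nonpos fun j hj => hoff j i (Finset.ne_of_mem_erase hj)
    linarith
  have hApos' : ∀ i, (0:ℝ) < A i i := fun i => lt_of_lt_of_le one_pos (hApos i)
  have hDinv : D⁻¹ = Matrix.diagonal fun i => (A i i)⁻¹ := by
    apply Matrix.inv_eq_right_inv
    rw [hD, Matrix.diagonal_mul_diagonal, ← Matrix.diagonal_one]
    have : (fun i => A i i * (A i i)⁻¹) = fun _ => (1:ℝ) :=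
      funext fun i => mul_inv_cancel₀ (ne_of_gt (hApos' i))
    rw [this]
  have hBentry : ∀ i j, Abar i j = ((if i = j then A i i else 0) - A i j) * (A j j)⁻¹ := by
    intro i j
    rw [hAbar, hDinv, Matrix.mul_diagonal, hD, Matrix.sub_apply, Matrix.diagonal_apply]
  have hBnonneg : ∀ i j, 0 ≤ Abar i j := by
    intro i j
    rw [hBentry]
    rcases eq_or_ne i j with rfl | h
    · simp
    · simp only [if_neg h]
      exact mul_nonneg (by have := hoff i j h; linarith) (le_of_lt (inv_pos.mpr (hApos' j)))
  have hcolA : ∀ j, ∑ i, A i j = 1 := by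
    intro j
    have := hdiag j
    rw [← Finset.add_sum_erase Finset.univ (fun i => A i j) (Finset.mem_univ j)]
    linarith
  have hcol : ∀ j, ∑ i, Abar i j = 1 - (A j j)⁻¹ := by
    intro j
    have : ∑ i, Abar i j = (∑ i, ((if i = j then A i i else 0) - A i j)) * (A j j)⁻¹ := by
      rw [Finset.sum_mul]
      exact Finset.sum_congr rfl fun i _ => hBentry i j
    rw [this, Finset.sum_sub_distrib, Finset.sum_ite_eq' Finset.univ j (fun i => A i i),
      if_pos (Finset.mem_univ j), hcolA j, sub_mul,
      mul_inv_cancel₀ (ne_of_gt (hApos' j)), one_mul]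
  have hcol_lt : ∀ j, ∑ i, Abar i j < 1 := by
    intro j
    rw [hcol j]
    have : 0 < (A j j)⁻¹ := inv_pos.mpr (hApos' j)
    linarith
  -- eigenvector
  set M := Abar.map (fun x => (x : ℂ)) with hM
  rw [spectrum.mem_iff] at hμ
  have hdet : (algebraMap ℂ (Matrix (Fin n) (Fin n) ℂ) μ - M).det = 0 := by
    by_contra h
    exact hμ ((Matrix.isUnit_iff_isUnit_det _).mpr (isUnit_iff_ne_zero.mpr h))
  obtain ⟨v, hv0, hv⟩ := (Matrix.exists_mulVec_eq_zero_iff).mpr hdet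
  have heig : M.mulVec v = μ • v := by
    have := hv
    rw [Matrix.sub_mulVec] at this
    have h1 : (algebraMap ℂ (Matrix (Fin n) (Fin n) ℂ) μ).mulVec v = μ • v := by
      rw [Algebra.algebraMap_eq_smul_one, Matrix.smul_mulVec, Matrix.one_mulVec]
    rw [h1] at this
    linear_combination (norm := module) -this
  -- sums
  obtain ⟨k, hk⟩ : ∃ k, v k ≠ 0 := Function.ne_iff.mp hv0
  have hS : 0 < ∑ i, ‖v i‖ := by
    apply Finset.sum_pos' (fun i _ => norm_nonneg _)
    exact ⟨k, Finset.mem_univ k, by simpa using hk⟩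
  have key : ‖μ‖ * ∑ i, ‖v i‖ < ∑ i, ‖v i‖ := by
    calc ‖μ‖ * ∑ i, ‖v i‖
        = ∑ i, ‖μ * v i‖ := by
          rw [Finset.mul_sum]; exact Finset.sum_congr rfl fun i _ => (norm_mul _ _).symm
      _ = ∑ i, ‖(M.mulVec v) i‖ := by
          refine Finset.sum_congr rfl fun i _ => ?_
          rw [heig]; simp [Pi.smul_apply, smul_eq_mul]
      _ ≤ ∑ i, ∑ j, Abar i j * ‖v j‖ := by
          refine Finset.sum_le_sum fun i _ => ?_
          rw [Matrix.mulVec, dotProduct]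
          refine le_trans (norm_sum_le _ _) (Finset.sum_le_sum fun j _ => ?_)
          rw [norm_mul]
          simp only [hM, Matrix.map_apply, Complex.norm_real, Real.norm_eq_abs]
          exact mul_le_mul_of_nonneg_right (abs_of_nonneg (hBnonneg i j)).le (norm_nonneg _)
      _ = ∑ j, (∑ i, Abar i j) * ‖v j‖ := by
          rw [Finset.sum_comm]
          exact Finset.sum_congr rfl fun j _ => (Finset.sum_mul _ _ _).symm
      _ < ∑ j, ‖v j‖ := by
          apply Finset.sum_lt_sum
          · intro j _
            calc (∑ i, Abar i j) * ‖v j‖ ≤ 1 * ‖v j‖ :=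
                  mul_le_mul_of_nonneg_right (le_of_lt (hcol_lt j)) (norm_nonneg _)
              _ = ‖v j‖ := one_mul _
          · exact ⟨k, Finset.mem_univ k, by
              have := hcol_lt k
              have hvk : 0 < ‖v k‖ := by simpa using hk
              calc (∑ i, Abar i k) * ‖v k‖ < 1 * ‖v k‖ :=
                    mul_lt_mul_of_pos_right this hvk
                _ = ‖v k‖ := one_mul _⟩
  nlinarith [hS, key, norm_nonneg μ]
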